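/- For any integer K ≥ 1 and probability p ∈ (0,1], the expected reciprocal of a binomial random variable conditioned on its support, computed as f(K,p) = Σ_{k=1}^{K} (1/k) · C(K,k) p^k (1-p)^{K-k}, satisfies f(K,p) ≤ 2/(K·p). -/

import Mathlib

theorem stmt_0 (K : ℕ) (hK : 1 ≤ K) (p : ℝ) (hp : 0 < p) (hp1 : p ≤ 1) :
    ∑ k ∈ Finset.Icc 1 K,
      (1 / (k : ℝ)) * (K.choose k : ℝ) * p ^ k * (1 - p) ^ (K - k)
      ≤ 2 / ((K : ℝ) * p) := by
  have hq : (0:ℝ) ≤ 1 - p := by linarith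
  have hK1 : (0:ℝ) < (K:ℝ) + 1 := by positivity
  -- step 1: termwise bound
  have step1 : ∑ k ∈ Finset.Icc 1 K,
      (1 / (k : ℝ)) * (K.choose k : ℝ) * p ^ k * (1 - p) ^ (K - k)
      ≤ ∑ k ∈ Finset.Icc 1 K,
        (2 / ((K:ℝ) + 1)) * ((K+1).choose (k+1) : ℝ) * p ^ k * (1 - p) ^ (K - k) := by
    apply Finset.sum_le_sum
    intro k hk
    obtain ⟨hk1, hkK⟩ := Finset.mem_Icc.mp hk
    have hkpos : (0:ℝ) < (k:ℝ) := by exact_mod_cast hk1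
    have hid : ((K+1).choose (k+1) : ℝ) * ((k:ℝ)+1) = ((K:ℝ)+1) * (K.choose k : ℝ) := by
      have := Nat.add_one_mul_choose_eq K k
      have : ((K+1) * K.choose k : ℕ) = ((K+1).choose (k+1) * (k+1) : ℕ) := this
      exact_mod_cast this.symm
    have key : (1 / (k : ℝ)) * (K.choose k : ℝ) ≤ (2 / ((K:ℝ) + 1)) * ((K+1).choose (k+1) : ℝ) := by
      rw [div_mul_eq_mul_div, div_mul_eq_mul_div, div_le_div_iff₀ hkpos hK1]
      have h2 : ((k:ℝ)+1) ≤ 2 * k := by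
        have : (1:ℝ) ≤ (k:ℝ) := by exact_mod_cast hk1
        linarith
      calc 1 * (K.choose k : ℝ) * ((K:ℝ)+1) = ((K+1).choose (k+1) : ℝ) * ((k:ℝ)+1) := by
            rw [hid]; ring
        _ ≤ ((K+1).choose (k+1) : ℝ) * (2 * k) := by
            apply mul_le_mul_of_nonneg_left h2 (by positivity)
        _ = 2 * ((K+1).choose (k+1) : ℝ) * k := by ring
    have hnn : (0:ℝ) ≤ p ^ k * (1 - p) ^ (K - k) := by positivity
    calc (1 / (k : ℝ)) * (K.choose k : ℝ) * p ^ k * (1 - p) ^ (K - k)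
        = ((1 / (k : ℝ)) * (K.choose k : ℝ)) * (p ^ k * (1 - p) ^ (K - k)) := by ring
      _ ≤ ((2 / ((K:ℝ) + 1)) * ((K+1).choose (k+1) : ℝ)) * (p ^ k * (1 - p) ^ (K - k)) := by
          exact mul_le_mul_of_nonneg_right key hnn
      _ = (2 / ((K:ℝ) + 1)) * ((K+1).choose (k+1) : ℝ) * p ^ k * (1 - p) ^ (K - k) := by ring
  -- step 2: the RHS equals (2/((K+1)p)) * binomial-tail sum
  have step2 : ∑ k ∈ Finset.Icc 1 K,
        (2 / ((K:ℝ) + 1)) * ((K+1).choose (k+1) : ℝ) * p ^ k * (1 - p) ^ (K - k)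
      = (2 / (((K:ℝ) + 1) * p)) *
        ∑ j ∈ Finset.Icc 2 (K+1), ((K+1).choose j : ℝ) * p ^ j * (1 - p) ^ (K + 1 - j) := by
    have hmap : Finset.Icc 2 (K+1) = Finset.map (addRightEmbedding 1) (Finset.Icc 1 K) := by
      rw [Finset.map_add_right_Icc]
    rw [hmap, Finset.sum_map, Finset.mul_sum]
    apply Finset.sum_congr rfl
    intro k hk
    obtain ⟨hk1, hkK⟩ := Finset.mem_Icc.mp hk
    simp only [addRightEmbedding_apply]
    have hsub : K + 1 - (k + 1) = K - k := by omega
    rw [hsub]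
    have hp' : p ≠ 0 := ne_of_gt hp
    field_simp
    ring
  -- step 3: the binomial tail sum ≤ 1
  have step3 : ∑ j ∈ Finset.Icc 2 (K+1), ((K+1).choose j : ℝ) * p ^ j * (1 - p) ^ (K + 1 - j) ≤ 1 := by
    have hfull : ∑ j ∈ Finset.range (K+2), p ^ j * (1 - p) ^ (K + 1 - j) * ((K+1).choose j : ℝ) = 1 := by
      have := add_pow p (1-p) (K+1)
      simp only [add_sub_cancel] at this
      rw [← this]
      norm_num
    calc ∑ j ∈ Finset.Icc 2 (K+1), ((K+1).choose j : ℝ) * p ^ j * (1 - p) ^ (K + 1 - j)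
        = ∑ j ∈ Finset.Icc 2 (K+1), p ^ j * (1 - p) ^ (K + 1 - j) * ((K+1).choose j : ℝ) := by
          apply Finset.sum_congr rfl; intros; ring
      _ ≤ ∑ j ∈ Finset.range (K+2), p ^ j * (1 - p) ^ (K + 1 - j) * ((K+1).choose j : ℝ) := by
          apply Finset.sum_le_sum_of_subset_of_nonneg
          · intro j hj
            obtain ⟨_, h2⟩ := Finset.mem_Icc.mp hj
            exact Finset.mem_range.mpr (by omega)
          · intros; positivity
      _ = 1 := hfull
  -- combine
  have hKpos : (0:ℝ) < K := by exact_mod_cast hK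
  calc ∑ k ∈ Finset.Icc 1 K,
      (1 / (k : ℝ)) * (K.choose k : ℝ) * p ^ k * (1 - p) ^ (K - k)
      ≤ (2 / (((K:ℝ) + 1) * p)) *
        ∑ j ∈ Finset.Icc 2 (K+1), ((K+1).choose j : ℝ) * p ^ j * (1 - p) ^ (K + 1 - j) := by
        rw [← step2]; exact step1
    _ ≤ (2 / (((K:ℝ) + 1) * p)) * 1 := by
        apply mul_le_mul_of_nonneg_left step3 (by positivity)
    _ ≤ 2 / ((K:ℝ) * p) := by
        rw [mul_one]
        apply div_le_div_of_nonneg_left (by norm_num) (by positivity)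
        apply mul_le_mul_of_nonneg_right _ (le_of_lt hp)
        linarith
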